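/- arXiv:2408.05582 — 2 statements merged into one kernel-verified Lean document; each statement's English description precedes it below -/
import Mathlib

section
/- Let X ∈ RB^{M×N} be fixed and define f(W,H) = (1/2)‖X - W·H‖_F^2 for W ∈ RB^{M×l} and H ∈ RB^{l×N}. Then f is differentiable in the four real component matrices of W and of H, and its RB gradients are ∇_W f(W,H) = (W·H - X)·H^H and ∇_H f(W,H) = W^H·(W·H - X); that is, the four real partial-derivative matrices of f with respect to the components W0,W1,W2,W3 equal, respectively, the real, i-, j-, and k-components of (W·H - X)·H^H, and analogously for H with W^H·(W·H - X). -/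
open Matrix

noncomputable section

/-- A reduced biquaternion `q = q0 + q1*i + q2*j + q3*k` with real components,
where `i^2 = k^2 = -1`, `j^2 = 1`, `ij = ji = k`, `jk = kj = i`, `ki = ik = -j`. -/
@[ext]
structure RB where
  r : ℝ
  i : ℝ
  j : ℝ
  k : ℝ

namespace RB

instance : Zero RB := ⟨⟨0, 0, 0, 0⟩⟩
instance : One RB := ⟨⟨1, 0, 0, 0⟩⟩
instance : Add RB := ⟨fun p q => ⟨p.r + q.r, p.i + q.i, p.j + q.j, p.k + q.k⟩⟩
instance : Neg RB := ⟨fun p => ⟨-p.r, -p.i, -p.j, -p.k⟩⟩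
instance : Mul RB := ⟨fun p q =>
  ⟨p.r * q.r - p.i * q.i + p.j * q.j - p.k * q.k,
   p.r * q.i + p.i * q.r + p.j * q.k + p.k * q.j,
   p.r * q.j + p.j * q.r - p.i * q.k - p.k * q.i,
   p.r * q.k + p.k * q.r + p.i * q.j + p.j * q.i⟩⟩
instance : SMul ℝ RB := ⟨fun a q => ⟨a * q.r, a * q.i, a * q.j, a * q.k⟩⟩

@[simp] theorem zero_r : (0 : RB).r = 0 := rfl
@[simp] theorem zero_i : (0 : RB).i = 0 := rfl
@[simp] theorem zero_j : (0 : RB).j = 0 := rfl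
@[simp] theorem zero_k : (0 : RB).k = 0 := rfl
@[simp] theorem one_r : (1 : RB).r = 1 := rfl
@[simp] theorem one_i : (1 : RB).i = 0 := rfl
@[simp] theorem one_j : (1 : RB).j = 0 := rfl
@[simp] theorem one_k : (1 : RB).k = 0 := rfl
@[simp] theorem add_r (p q : RB) : (p + q).r = p.r + q.r := rfl
@[simp] theorem add_i (p q : RB) : (p + q).i = p.i + q.i := rfl
@[simp] theorem add_j (p q : RB) : (p + q).j = p.j + q.j := rfl
@[simp] theorem add_k (p q : RB) : (p + q).k = p.k + q.k := rfl
@[simp] theorem neg_r (p : RB) : (-p).r = -p.r := rfl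
@[simp] theorem neg_i (p : RB) : (-p).i = -p.i := rfl
@[simp] theorem neg_j (p : RB) : (-p).j = -p.j := rfl
@[simp] theorem neg_k (p : RB) : (-p).k = -p.k := rfl
@[simp] theorem mul_r (p q : RB) :
    (p * q).r = p.r * q.r - p.i * q.i + p.j * q.j - p.k * q.k := rfl
@[simp] theorem mul_i (p q : RB) :
    (p * q).i = p.r * q.i + p.i * q.r + p.j * q.k + p.k * q.j := rfl
@[simp] theorem mul_j (p q : RB) :
    (p * q).j = p.r * q.j + p.j * q.r - p.i * q.k - p.k * q.i := rfl
@[simp] theorem mul_k (p q : RB) :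
    (p * q).k = p.r * q.k + p.k * q.r + p.i * q.j + p.j * q.i := rfl
@[simp] theorem smul_r (a : ℝ) (q : RB) : (a • q).r = a * q.r := rfl
@[simp] theorem smul_i (a : ℝ) (q : RB) : (a • q).i = a * q.i := rfl
@[simp] theorem smul_j (a : ℝ) (q : RB) : (a • q).j = a * q.j := rfl
@[simp] theorem smul_k (a : ℝ) (q : RB) : (a • q).k = a * q.k := rfl

instance : CommRing RB where
  add := (· + ·)
  zero := 0
  neg := Neg.neg
  mul := (· * ·)
  one := 1
  add_assoc p q s := by ext <;> simp <;> ring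
  zero_add p := by ext <;> simp
  add_zero p := by ext <;> simp
  add_comm p q := by ext <;> simp <;> ring
  neg_add_cancel p := by ext <;> simp
  mul_assoc p q s := by ext <;> simp <;> ring
  one_mul p := by ext <;> simp
  mul_one p := by ext <;> simp
  left_distrib p q s := by ext <;> simp <;> ring
  right_distrib p q s := by ext <;> simp <;> ring
  zero_mul p := by ext <;> simp
  mul_zero p := by ext <;> simp
  mul_comm p q := by ext <;> simp <;> ring
  nsmul := nsmulRec
  zsmul := zsmulRec

/-- The imaginary unit `i` of the reduced biquaternions. -/
def uI : RB := ⟨0, 1, 0, 0⟩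
/-- The imaginary unit `j` of the reduced biquaternions. -/
def uJ : RB := ⟨0, 0, 1, 0⟩
/-- The imaginary unit `k` of the reduced biquaternions. -/
def uK : RB := ⟨0, 0, 0, 1⟩

/-- Embedding of the reals into the reduced biquaternions. -/
def ofReal (a : ℝ) : RB := ⟨a, 0, 0, 0⟩

/-- Embedding of the complex numbers into the reduced biquaternions,
`x + y*î ↦ x + y*i`. -/
def ofComplex (z : ℂ) : RB := ⟨z.re, z.im, 0, 0⟩

/-- Conjugation of a reduced biquaternion: `q* = q0 - q1*i + q2*j - q3*k`. -/
def conj (q : RB) : RB := ⟨q.r, -q.i, q.j, -q.k⟩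

instance : Star RB := ⟨conj⟩

/-- The idempotent `e1 = (1 + j)/2`. -/
def e1 : RB := ⟨1/2, 0, 1/2, 0⟩

/-- The idempotent `e2 = (1 - j)/2`. -/
def e2 : RB := ⟨1/2, 0, -(1/2), 0⟩

end RB

/-- Real-part component matrix of an RB matrix. -/
def Mr {m n : Type*} (Q : Matrix m n RB) : Matrix m n ℝ := Matrix.of fun a b => (Q a b).r
/-- `i`-part component matrix of an RB matrix. -/
def Mi {m n : Type*} (Q : Matrix m n RB) : Matrix m n ℝ := Matrix.of fun a b => (Q a b).i
/-- `j`-part component matrix of an RB matrix. -/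
def Mj {m n : Type*} (Q : Matrix m n RB) : Matrix m n ℝ := Matrix.of fun a b => (Q a b).j
/-- `k`-part component matrix of an RB matrix. -/
def Mk {m n : Type*} (Q : Matrix m n RB) : Matrix m n ℝ := Matrix.of fun a b => (Q a b).k

/-- The RB matrix `Q0 + Q1*i + Q2*j + Q3*k` built from four real component matrices. -/
def mk4 {m n : Type*} (A0 A1 A2 A3 : m → n → ℝ) : Matrix m n RB :=
  Matrix.of fun a b => ⟨A0 a b, A1 a b, A2 a b, A3 a b⟩

/-- Inner product of two RB matrices: `⟨Q,P⟩ = Σ_{m,n} (q_{mn})* ⬝ p_{mn}`. -/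
def minner {m n : Type*} [Fintype m] [Fintype n] (Q P : Matrix m n RB) : RB :=
  ∑ a, ∑ b, RB.conj (Q a b) * P a b

/-- The Frobenius norm of an RB matrix, `‖Q‖_F = sqrt(Re⟨Q,Q⟩)`. -/
def fnorm {m n : Type*} [Fintype m] [Fintype n] (Q : Matrix m n RB) : ℝ :=
  Real.sqrt (minner Q Q).r

/-- Real Frobenius inner product of real matrices. -/
def finner {m n : Type*} [Fintype m] [Fintype n] (A B : Matrix m n ℝ) : ℝ :=
  ∑ a, ∑ b, A a b * B a b

/-- Real Frobenius norm of a real matrix. -/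
def rnorm {m n : Type*} [Fintype m] [Fintype n] (A : Matrix m n ℝ) : ℝ :=
  Real.sqrt (finner A A)

/-- `Q ∈ RB_+^{M×N}`: all four real component matrices are entrywise nonnegative. -/
def Pos {m n : Type*} (Q : Matrix m n RB) : Prop :=
  ∀ a b, 0 ≤ (Q a b).r ∧ 0 ≤ (Q a b).i ∧ 0 ≤ (Q a b).j ∧ 0 ≤ (Q a b).k

/-- `Q ∈ RB_{+j}^{M×N}`: `Q = Q0 + Q2*j` with `Q0, Q2` entrywise nonnegative. -/
def PosJ {m n : Type*} (Q : Matrix m n RB) : Prop :=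
  ∀ a b, 0 ≤ (Q a b).r ∧ (Q a b).i = 0 ∧ 0 ≤ (Q a b).j ∧ (Q a b).k = 0

/-- The projection `P_+` onto `RB_+^{M×N}`: entrywise positive part in all four components. -/
def proj {m n : Type*} (Q : Matrix m n RB) : Matrix m n RB :=
  Matrix.of fun a b => ⟨max (Q a b).r 0, max (Q a b).i 0, max (Q a b).j 0, max (Q a b).k 0⟩

/-- The projection `P_{+j}` onto `RB_{+j}^{M×N}`: `Q ↦ max(Q0,0) + max(Q2,0)*j`. -/
def projJ {m n : Type*} (Q : Matrix m n RB) : Matrix m n RB :=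
  Matrix.of fun a b => ⟨max (Q a b).r 0, 0, max (Q a b).j 0, 0⟩

/-- The objective `f(W,H) = (1/2)*‖X - W*H‖_F^2`. -/
def objf {M N l : ℕ} (X : Matrix (Fin M) (Fin N) RB) (W : Matrix (Fin M) (Fin l) RB)
    (H : Matrix (Fin l) (Fin N) RB) : ℝ :=
  (1 / 2) * fnorm (X - W * H) ^ 2

/-- The RB gradient `∇_W f(W,H) = (W*H - X)*H^H`. -/
def gradW {M N l : ℕ} (X : Matrix (Fin M) (Fin N) RB) (W : Matrix (Fin M) (Fin l) RB)
    (H : Matrix (Fin l) (Fin N) RB) : Matrix (Fin M) (Fin l) RB :=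
  (W * H - X) * Hᴴ

/-- The RB gradient `∇_H f(W,H) = W^H*(W*H - X)`. -/
def gradH {M N l : ℕ} (X : Matrix (Fin M) (Fin N) RB) (W : Matrix (Fin M) (Fin l) RB)
    (H : Matrix (Fin l) (Fin N) RB) : Matrix (Fin l) (Fin N) RB :=
  Wᴴ * (W * H - X)

/-- Entrywise embedding of a complex matrix into RB matrices. -/
def cmat {m n : Type*} (A : Matrix m n ℂ) : Matrix m n RB :=
  Matrix.of fun a b => RB.ofComplex (A a b)

/-- The `e1–e2` form `N1*e1 + N2*e2` of an RB matrix, for complex matrices `N1, N2`. -/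
def eform {m n : Type*} (N1 N2 : Matrix m n ℂ) : Matrix m n RB :=
  Matrix.of fun a b => RB.ofComplex (N1 a b) * RB.e1 + RB.ofComplex (N2 a b) * RB.e2


section Aux

/-! ### Auxiliary lemmas -/

/-- Component projection of an RB number. -/
def cpt (s : Fin 4) (q : RB) : ℝ := ![q.r, q.i, q.j, q.k] s

@[simp] lemma cpt_add (s : Fin 4) (p q : RB) : cpt s (p + q) = cpt s p + cpt s q := by
  fin_cases s <;> simp [cpt]

@[simp] lemma cpt_neg (s : Fin 4) (q : RB) : cpt s (-q) = -cpt s q := by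
  fin_cases s <;> simp [cpt]

@[simp] lemma cpt_sub (s : Fin 4) (p q : RB) : cpt s (p - q) = cpt s p - cpt s q := by
  rw [sub_eq_add_neg, sub_eq_add_neg, cpt_add, cpt_neg]

lemma r_sum {ι : Type*} (s : Finset ι) (f : ι → RB) :
    (∑ x ∈ s, f x).r = ∑ x ∈ s, (f x).r :=
  map_sum (AddMonoidHom.mk' RB.r fun _ _ => rfl) f s

lemma i_sum {ι : Type*} (s : Finset ι) (f : ι → RB) :
    (∑ x ∈ s, f x).i = ∑ x ∈ s, (f x).i :=
  map_sum (AddMonoidHom.mk' RB.i fun _ _ => rfl) f s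

lemma j_sum {ι : Type*} (s : Finset ι) (f : ι → RB) :
    (∑ x ∈ s, f x).j = ∑ x ∈ s, (f x).j :=
  map_sum (AddMonoidHom.mk' RB.j fun _ _ => rfl) f s

lemma k_sum {ι : Type*} (s : Finset ι) (f : ι → RB) :
    (∑ x ∈ s, f x).k = ∑ x ∈ s, (f x).k :=
  map_sum (AddMonoidHom.mk' RB.k fun _ _ => rfl) f s

/-- Real inner product of two RB numbers (sum over the four components). -/
def dotRB (p q : RB) : ℝ := p.r * q.r + p.i * q.i + p.j * q.j + p.k * q.k

lemma dotRB_eq_sum (p q : RB) : dotRB p q = ∑ s : Fin 4, cpt s p * cpt s q := by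
  simp [dotRB, cpt, Fin.sum_univ_four]

lemma dotRB_self (q : RB) : dotRB q q = ∑ s : Fin 4, cpt s q * cpt s q := by
  simp [dotRB, cpt, Fin.sum_univ_four]

lemma dot_sum_left {ι : Type*} (s : Finset ι) (f : ι → RB) (b : RB) :
    dotRB (∑ x ∈ s, f x) b = ∑ x ∈ s, dotRB (f x) b := by
  simp [dotRB, r_sum, i_sum, j_sum, k_sum, Finset.sum_mul, ← Finset.sum_add_distrib]

lemma dot_sum_right {ι : Type*} (s : Finset ι) (f : ι → RB) (a : RB) :
    dotRB a (∑ x ∈ s, f x) = ∑ x ∈ s, dotRB a (f x) := by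
  simp [dotRB, r_sum, i_sum, j_sum, k_sum, Finset.mul_sum, ← Finset.sum_add_distrib]

lemma dot_mul_conj (a q h : RB) : dotRB a (q * h) = dotRB (a * RB.conj h) q := by
  simp only [dotRB, RB.conj, RB.mul_r, RB.mul_i, RB.mul_j, RB.mul_k]
  ring

lemma dot_conj_mul (a w q : RB) : dotRB a (w * q) = dotRB (RB.conj w * a) q := by
  simp only [dotRB, RB.conj, RB.mul_r, RB.mul_i, RB.mul_j, RB.mul_k]
  ring

lemma fnorm_sq {m n : Type*} [Fintype m] [Fintype n] (Q : Matrix m n RB) :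
    fnorm Q ^ 2 = ∑ a, ∑ b, dotRB (Q a b) (Q a b) := by
  have h : (minner Q Q).r = ∑ a, ∑ b, dotRB (Q a b) (Q a b) := by
    simp only [minner, r_sum]
    refine Finset.sum_congr rfl fun a _ => Finset.sum_congr rfl fun b _ => ?_
    simp only [RB.conj, RB.mul_r, dotRB]
    ring
  rw [fnorm, Real.sq_sqrt, h]
  rw [h]
  refine Finset.sum_nonneg fun a _ => Finset.sum_nonneg fun b _ => ?_
  have h1 := mul_self_nonneg (Q a b).r
  have h2 := mul_self_nonneg (Q a b).i
  have h3 := mul_self_nonneg (Q a b).j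
  have h4 := mul_self_nonneg (Q a b).k
  simp only [dotRB]
  linarith

lemma objf_eq {M N l : ℕ} (X : Matrix (Fin M) (Fin N) RB) (W : Matrix (Fin M) (Fin l) RB)
    (H : Matrix (Fin l) (Fin N) RB) :
    objf X W H = (1 / 2) * ∑ m, ∑ n,
      dotRB ((X - W * H) m n) ((X - W * H) m n) := by
  rw [objf, fnorm_sq]

theorem main_aux {E : Type*} [NormedAddCommGroup E] [NormedSpace ℝ E]
    {ι : Type*} [Fintype ι] (c : ι → ℝ) (φ : ι → E →L[ℝ] ℝ) (p₀ : E) :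
    HasFDerivAt (fun p => (1 / 2 : ℝ) * ∑ x, (c x - φ x p) * (c x - φ x p))
      (∑ x, (φ x p₀ - c x) • (φ x)) p₀ := by
  have h1 : ∀ x : ι, HasFDerivAt (fun p => (c x - φ x p) * (c x - φ x p))
      ((c x - φ x p₀) • (-(φ x) : E →L[ℝ] ℝ) + (c x - φ x p₀) • (-(φ x) : E →L[ℝ] ℝ)) p₀ := by
    intro x
    have hg : HasFDerivAt (fun p => c x - φ x p) (-(φ x)) p₀ :=
      (φ x).hasFDerivAt.const_sub _
    exact hg.mul hg
  have h2 := HasFDerivAt.fun_sum (fun x (_ : x ∈ Finset.univ) => h1 x)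
  have h3 := h2.const_mul (1 / 2 : ℝ)
  convert h3 using 1
  · rfl
  · rfl
  ext v
  simp only [ContinuousLinearMap.sum_apply, ContinuousLinearMap.smul_apply,
    ContinuousLinearMap.neg_apply, ContinuousLinearMap.add_apply, smul_eq_mul]
  rw [Finset.mul_sum]
  refine Finset.sum_congr rfl fun x _ => ?_
  ring

end Aux

section Phi

variable {M N l : ℕ}

/-- Parameter space for the four component matrices. -/
abbrev Par (a b : ℕ) := (Fin a → Fin b → ℝ) × (Fin a → Fin b → ℝ) × (Fin a → Fin b → ℝ) ×
    (Fin a → Fin b → ℝ)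

lemma cpt_sum {ι : Type*} (s : Fin 4) (t : Finset ι) (f : ι → RB) :
    cpt s (∑ x ∈ t, f x) = ∑ x ∈ t, cpt s (f x) := by
  fin_cases s <;> simp [cpt, r_sum, i_sum, j_sum, k_sum]

lemma cpt_smul (s : Fin 4) (a : ℝ) (q : RB) : cpt s (a • q) = a * cpt s q := by
  fin_cases s <;> rfl

lemma smul_mul_rb (a : ℝ) (p q : RB) : (a • p) * q = a • (p * q) := by
  ext <;> simp <;> ring

lemma mul_smul_rb (a : ℝ) (p q : RB) : p * (a • q) = a • (p * q) := by
  ext <;> simp <;> ring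

lemma mk4_mul_entry (A0 A1 A2 A3 : Fin M → Fin l → ℝ) (H : Matrix (Fin l) (Fin N) RB)
    (m : Fin M) (n : Fin N) :
    (mk4 A0 A1 A2 A3 * H) m n = ∑ t, (⟨A0 m t, A1 m t, A2 m t, A3 m t⟩ : RB) * H t n := by
  simp [Matrix.mul_apply, mk4]

lemma mul_mk4_entry (A0 A1 A2 A3 : Fin l → Fin N → ℝ) (W : Matrix (Fin M) (Fin l) RB)
    (m : Fin M) (n : Fin N) :
    (W * mk4 A0 A1 A2 A3) m n = ∑ t, W m t * (⟨A0 t n, A1 t n, A2 t n, A3 t n⟩ : RB) := by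
  simp [Matrix.mul_apply, mk4]

lemma isLinW (H : Matrix (Fin l) (Fin N) RB) (s : Fin 4) (m : Fin M) (n : Fin N) :
    IsLinearMap ℝ (fun p : Par M l => cpt s ((mk4 p.1 p.2.1 p.2.2.1 p.2.2.2 * H) m n)) := by
  constructor
  · intro p q
    simp only [mk4_mul_entry, cpt_sum, ← Finset.sum_add_distrib]
    refine Finset.sum_congr rfl fun t _ => ?_
    have h : (⟨(p + q).1 m t, (p + q).2.1 m t, (p + q).2.2.1 m t, (p + q).2.2.2 m t⟩ : RB)
        = (⟨p.1 m t, p.2.1 m t, p.2.2.1 m t, p.2.2.2 m t⟩ : RB)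
          + (⟨q.1 m t, q.2.1 m t, q.2.2.1 m t, q.2.2.2 m t⟩ : RB) := rfl
    rw [h, add_mul, cpt_add]
  · intro a p
    simp only [smul_eq_mul, mk4_mul_entry, cpt_sum, Finset.mul_sum]
    refine Finset.sum_congr rfl fun t _ => ?_
    have h : (⟨(a • p).1 m t, (a • p).2.1 m t, (a • p).2.2.1 m t, (a • p).2.2.2 m t⟩ : RB)
        = a • (⟨p.1 m t, p.2.1 m t, p.2.2.1 m t, p.2.2.2 m t⟩ : RB) := rfl
    rw [h, smul_mul_rb, cpt_smul]

lemma isLinH (W : Matrix (Fin M) (Fin l) RB) (s : Fin 4) (m : Fin M) (n : Fin N) :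
    IsLinearMap ℝ (fun p : Par l N => cpt s ((W * mk4 p.1 p.2.1 p.2.2.1 p.2.2.2) m n)) := by
  constructor
  · intro p q
    simp only [mul_mk4_entry, cpt_sum, ← Finset.sum_add_distrib]
    refine Finset.sum_congr rfl fun t _ => ?_
    have h : (⟨(p + q).1 t n, (p + q).2.1 t n, (p + q).2.2.1 t n, (p + q).2.2.2 t n⟩ : RB)
        = (⟨p.1 t n, p.2.1 t n, p.2.2.1 t n, p.2.2.2 t n⟩ : RB)
          + (⟨q.1 t n, q.2.1 t n, q.2.2.1 t n, q.2.2.2 t n⟩ : RB) := rfl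
    rw [h, mul_add, cpt_add]
  · intro a p
    simp only [smul_eq_mul, mul_mk4_entry, cpt_sum, Finset.mul_sum]
    refine Finset.sum_congr rfl fun t _ => ?_
    have h : (⟨(a • p).1 t n, (a • p).2.1 t n, (a • p).2.2.1 t n, (a • p).2.2.2 t n⟩ : RB)
        = a • (⟨p.1 t n, p.2.1 t n, p.2.2.1 t n, p.2.2.2 t n⟩ : RB) := rfl
    rw [h, mul_smul_rb, cpt_smul]

/-- The continuous linear map `p ↦ cpt s ((mk4 p * H) m n)`. -/
def phiW (H : Matrix (Fin l) (Fin N) RB) (x : Fin M × Fin N × Fin 4) : Par M l →L[ℝ] ℝ :=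
  LinearMap.toContinuousLinearMap (IsLinearMap.mk' _ (isLinW H x.2.2 x.1 x.2.1))

/-- The continuous linear map `p ↦ cpt s ((W * mk4 p) m n)`. -/
def phiH (W : Matrix (Fin M) (Fin l) RB) (x : Fin M × Fin N × Fin 4) : Par l N →L[ℝ] ℝ :=
  LinearMap.toContinuousLinearMap (IsLinearMap.mk' _ (isLinH W x.2.2 x.1 x.2.1))

@[simp] lemma phiW_apply (H : Matrix (Fin l) (Fin N) RB) (x : Fin M × Fin N × Fin 4)
    (p : Par M l) :
    phiW H x p = cpt x.2.2 ((mk4 p.1 p.2.1 p.2.2.1 p.2.2.2 * H) x.1 x.2.1) := rfl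

@[simp] lemma phiH_apply (W : Matrix (Fin M) (Fin l) RB) (x : Fin M × Fin N × Fin 4)
    (p : Par l N) :
    phiH W x p = cpt x.2.2 ((W * mk4 p.1 p.2.1 p.2.2.1 p.2.2.2) x.1 x.2.1) := rfl

end Phi

section Adj

variable {M N l : ℕ}

lemma star_eq_conj (q : RB) : star q = RB.conj q := rfl

lemma adjW (A : Matrix (Fin M) (Fin N) RB) (Q : Matrix (Fin M) (Fin l) RB)
    (H : Matrix (Fin l) (Fin N) RB) :
    ∑ m, ∑ n, dotRB (A m n) ((Q * H) m n) = ∑ m, ∑ t, dotRB ((A * Hᴴ) m t) (Q m t) := by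
  refine Finset.sum_congr rfl fun m _ => ?_
  simp only [Matrix.mul_apply, dot_sum_right, dot_sum_left]
  rw [Finset.sum_comm]
  refine Finset.sum_congr rfl fun t _ => Finset.sum_congr rfl fun n _ => ?_
  rw [dot_mul_conj, Matrix.conjTranspose_apply, star_eq_conj]

lemma adjH (A : Matrix (Fin M) (Fin N) RB) (W : Matrix (Fin M) (Fin l) RB)
    (Q : Matrix (Fin l) (Fin N) RB) :
    ∑ m, ∑ n, dotRB (A m n) ((W * Q) m n) = ∑ t, ∑ n, dotRB ((Wᴴ * A) t n) (Q t n) := by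
  simp only [Matrix.mul_apply, dot_sum_right, dot_sum_left]
  have h1 : ∀ m : Fin M, ∑ n : Fin N, ∑ t : Fin l, dotRB (A m n) (W m t * Q t n)
      = ∑ t : Fin l, ∑ n : Fin N, dotRB (A m n) (W m t * Q t n) := fun m => Finset.sum_comm
  simp only [h1]
  rw [Finset.sum_comm]
  refine Finset.sum_congr rfl fun t _ => ?_
  rw [Finset.sum_comm]
  refine Finset.sum_congr rfl fun n _ => Finset.sum_congr rfl fun m _ => ?_
  rw [dot_conj_mul, Matrix.conjTranspose_apply, star_eq_conj]

lemma mk4_re (A : Matrix (Fin M) (Fin N) RB) : mk4 (Mr A) (Mi A) (Mj A) (Mk A) = A := by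
  ext a b <;> rfl

lemma sum_dot_mk4 {m n : Type*} [Fintype m] [Fintype n] (G : Matrix m n RB)
    (V0 V1 V2 V3 : Matrix m n ℝ) :
    ∑ a, ∑ b, dotRB (G a b) (mk4 V0 V1 V2 V3 a b)
      = finner (Mr G) V0 + finner (Mi G) V1 + finner (Mj G) V2 + finner (Mk G) V3 := by
  simp only [finner, Mr, Mi, Mj, Mk, ← Finset.sum_add_distrib]
  refine Finset.sum_congr rfl fun a _ => Finset.sum_congr rfl fun b _ => ?_
  simp [dotRB, mk4]

end Adj
/-- `f(W,H) = (1/2)‖X - W*H‖_F²` is differentiable in the four real component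
matrices of `W` (resp. of `H`), and the four real partial-derivative matrices equal the
real, i-, j-, k-components of `(W*H - X)*H^H` (resp. of `W^H*(W*H - X)`). -/
theorem rb_gradient {M N l : ℕ} (X : Matrix (Fin M) (Fin N) RB)
    (W : Matrix (Fin M) (Fin l) RB) (H : Matrix (Fin l) (Fin N) RB) :
    (DifferentiableAt ℝ
        (fun p : (Fin M → Fin l → ℝ) × (Fin M → Fin l → ℝ) × (Fin M → Fin l → ℝ) ×
            (Fin M → Fin l → ℝ) => objf X (mk4 p.1 p.2.1 p.2.2.1 p.2.2.2) H)
        (Mr W, Mi W, Mj W, Mk W) ∧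
      ∀ V0 V1 V2 V3 : Matrix (Fin M) (Fin l) ℝ,
        fderiv ℝ
          (fun p : (Fin M → Fin l → ℝ) × (Fin M → Fin l → ℝ) × (Fin M → Fin l → ℝ) ×
              (Fin M → Fin l → ℝ) => objf X (mk4 p.1 p.2.1 p.2.2.1 p.2.2.2) H)
          (Mr W, Mi W, Mj W, Mk W) (V0, V1, V2, V3) =
        finner (Mr (gradW X W H)) V0 + finner (Mi (gradW X W H)) V1 +
          finner (Mj (gradW X W H)) V2 + finner (Mk (gradW X W H)) V3) ∧
    (DifferentiableAt ℝ
        (fun p : (Fin l → Fin N → ℝ) × (Fin l → Fin N → ℝ) × (Fin l → Fin N → ℝ) ×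
            (Fin l → Fin N → ℝ) => objf X W (mk4 p.1 p.2.1 p.2.2.1 p.2.2.2))
        (Mr H, Mi H, Mj H, Mk H) ∧
      ∀ V0 V1 V2 V3 : Matrix (Fin l) (Fin N) ℝ,
        fderiv ℝ
          (fun p : (Fin l → Fin N → ℝ) × (Fin l → Fin N → ℝ) × (Fin l → Fin N → ℝ) ×
              (Fin l → Fin N → ℝ) => objf X W (mk4 p.1 p.2.1 p.2.2.1 p.2.2.2))
          (Mr H, Mi H, Mj H, Mk H) (V0, V1, V2, V3) =
        finner (Mr (gradH X W H)) V0 + finner (Mi (gradH X W H)) V1 +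
          finner (Mj (gradH X W H)) V2 + finner (Mk (gradH X W H)) V3) := by
  constructor
  · -- gradient with respect to W
    have key : HasFDerivAt
        (fun p : Par M l => objf X (mk4 p.1 p.2.1 p.2.2.1 p.2.2.2) H)
        (∑ x : Fin M × Fin N × Fin 4,
          (phiW H x (Mr W, Mi W, Mj W, Mk W) - cpt x.2.2 (X x.1 x.2.1)) • phiW H x)
        (Mr W, Mi W, Mj W, Mk W) := by
      have hfun : (fun p : Par M l => objf X (mk4 p.1 p.2.1 p.2.2.1 p.2.2.2) H)
          = fun p => (1 / 2 : ℝ) * ∑ x : Fin M × Fin N × Fin 4,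
              (cpt x.2.2 (X x.1 x.2.1) - phiW H x p) *
                (cpt x.2.2 (X x.1 x.2.1) - phiW H x p) := by
        funext p
        rw [objf_eq]
        congr 1
        rw [Fintype.sum_prod_type]
        refine Finset.sum_congr rfl fun m _ => ?_
        rw [Fintype.sum_prod_type]
        refine Finset.sum_congr rfl fun n _ => ?_
        rw [dotRB_self]
        refine Finset.sum_congr rfl fun s _ => ?_
        have h : cpt s ((X - mk4 p.1 p.2.1 p.2.2.1 p.2.2.2 * H) m n)
            = cpt s (X m n) - phiW H (m, n, s) p := by
          rw [Matrix.sub_apply, cpt_sub, phiW_apply]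
        rw [h]
      rw [hfun]
      exact main_aux _ _ _
    refine ⟨key.differentiableAt, fun V0 V1 V2 V3 => ?_⟩
    rw [key.fderiv]
    simp only [ContinuousLinearMap.sum_apply, ContinuousLinearMap.smul_apply, smul_eq_mul,
      phiW_apply, mk4_re]
    calc (∑ x : Fin M × Fin N × Fin 4,
          (cpt x.2.2 ((W * H) x.1 x.2.1) - cpt x.2.2 (X x.1 x.2.1)) *
            cpt x.2.2 ((mk4 V0 V1 V2 V3 * H) x.1 x.2.1))
        = ∑ m, ∑ n, dotRB ((W * H - X) m n) ((mk4 V0 V1 V2 V3 * H) m n) := by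
          rw [Fintype.sum_prod_type]
          refine Finset.sum_congr rfl fun m _ => ?_
          rw [Fintype.sum_prod_type]
          refine Finset.sum_congr rfl fun n _ => ?_
          rw [dotRB_eq_sum]
          refine Finset.sum_congr rfl fun s _ => ?_
          rw [Matrix.sub_apply, cpt_sub]
      _ = ∑ m, ∑ t, dotRB (((W * H - X) * Hᴴ) m t) (mk4 V0 V1 V2 V3 m t) := adjW _ _ _
      _ = finner (Mr (gradW X W H)) V0 + finner (Mi (gradW X W H)) V1 +
            finner (Mj (gradW X W H)) V2 + finner (Mk (gradW X W H)) V3 := by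
          rw [sum_dot_mk4]; rfl
  · -- gradient with respect to H
    have key : HasFDerivAt
        (fun p : Par l N => objf X W (mk4 p.1 p.2.1 p.2.2.1 p.2.2.2))
        (∑ x : Fin M × Fin N × Fin 4,
          (phiH W x (Mr H, Mi H, Mj H, Mk H) - cpt x.2.2 (X x.1 x.2.1)) • phiH W x)
        (Mr H, Mi H, Mj H, Mk H) := by
      have hfun : (fun p : Par l N => objf X W (mk4 p.1 p.2.1 p.2.2.1 p.2.2.2))
          = fun p => (1 / 2 : ℝ) * ∑ x : Fin M × Fin N × Fin 4,
              (cpt x.2.2 (X x.1 x.2.1) - phiH W x p) *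
                (cpt x.2.2 (X x.1 x.2.1) - phiH W x p) := by
        funext p
        rw [objf_eq]
        congr 1
        rw [Fintype.sum_prod_type]
        refine Finset.sum_congr rfl fun m _ => ?_
        rw [Fintype.sum_prod_type]
        refine Finset.sum_congr rfl fun n _ => ?_
        rw [dotRB_self]
        refine Finset.sum_congr rfl fun s _ => ?_
        have h : cpt s ((X - W * mk4 p.1 p.2.1 p.2.2.1 p.2.2.2) m n)
            = cpt s (X m n) - phiH W (m, n, s) p := by
          rw [Matrix.sub_apply, cpt_sub, phiH_apply]
        rw [h]
      rw [hfun]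
      exact main_aux _ _ _
    refine ⟨key.differentiableAt, fun V0 V1 V2 V3 => ?_⟩
    rw [key.fderiv]
    simp only [ContinuousLinearMap.sum_apply, ContinuousLinearMap.smul_apply, smul_eq_mul,
      phiH_apply, mk4_re]
    calc (∑ x : Fin M × Fin N × Fin 4,
          (cpt x.2.2 ((W * H) x.1 x.2.1) - cpt x.2.2 (X x.1 x.2.1)) *
            cpt x.2.2 ((W * mk4 V0 V1 V2 V3) x.1 x.2.1))
        = ∑ m, ∑ n, dotRB ((W * H - X) m n) ((W * mk4 V0 V1 V2 V3) m n) := by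
          rw [Fintype.sum_prod_type]
          refine Finset.sum_congr rfl fun m _ => ?_
          rw [Fintype.sum_prod_type]
          refine Finset.sum_congr rfl fun n _ => ?_
          rw [dotRB_eq_sum]
          refine Finset.sum_congr rfl fun s _ => ?_
          rw [Matrix.sub_apply, cpt_sub]
      _ = ∑ t, ∑ n, dotRB ((Wᴴ * (W * H - X)) t n) (mk4 V0 V1 V2 V3 t n) := adjH _ _ _
      _ = finner (Mr (gradH X W H)) V0 + finner (Mi (gradH X W H)) V1 +
            finner (Mj (gradH X W H)) V2 + finner (Mk (gradH X W H)) V3 := by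
          rw [sum_dot_mk4]; rfl
end
end

section
/- (Convergence of the RB projected gradient method to a stationary point.) Let X ∈ RB^{M×N}, f(W,H) = (1/2)‖X - W·H‖_F^2, σ ∈ (0,1), μ ∈ (0,1). Suppose sequences W_t ∈ RB_+^{M×l}, H_t ∈ RB_{+j}^{l×N} are generated by: W_{t+1} = P_+(W_t - α_t·∇_W f(W_t,H_t)) where α_t = μ^{d_t} and d_t is the smallest nonnegative integer d for which f(P_+(W_t - μ^d·∇_W f(W_t,H_t)), H_t) - f(W_t,H_t) ≤ σ·Re⟨∇_W f(W_t,H_t), P_+(W_t - μ^d·∇_W f(W_t,H_t)) - W_t⟩; and H_{t+1} = P_{+j}(H_t - β_t·∇_H f(W_{t+1},H_t)) where β_t = μ^{s_t} and s_t is the smallest nonnegative integer s for which the analogous Armijo condition for H holds. If W_t converges to W* and H_t converges to H* (componentwise in all four real component matrices), then (W*,H*) is a stationary point of the problem of minimizing f over RB_+^{M×l} × RB_{+j}^{l×N}; that is, Re⟨∇_W f(W*,H*), M - W*⟩ ≥ 0 for all M ∈ RB_+^{M×l} and Re⟨∇_H f(W*,H*), N - H*⟩ ≥ 0 for all N ∈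 RB_{+j}^{l×N}. -/
open Matrix

noncomputable section

/-- The Armijo sufficient-decrease condition for the `W`-update with step size `η`. -/
def armijoW {M N l : ℕ} (X : Matrix (Fin M) (Fin N) RB) (W : Matrix (Fin M) (Fin l) RB)
    (H : Matrix (Fin l) (Fin N) RB) (σ η : ℝ) : Prop :=
  objf X (proj (W - η • gradW X W H)) H - objf X W H ≤
    σ * (minner (gradW X W H) (proj (W - η • gradW X W H) - W)).r

/-- The Armijo sufficient-decrease condition for the `H`-update with step size `η`. -/
def armijoH {M N l : ℕ} (X : Matrix (Fin M) (Fin N) RB) (W : Matrix (Fin M) (Fin l) RB)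
    (H : Matrix (Fin l) (Fin N) RB) (σ η : ℝ) : Prop :=
  objf X W (projJ (H - η • gradH X W H)) - objf X W H ≤
    σ * (minner (gradH X W H) (projJ (H - η • gradH X W H) - H)).r

section Aux

open Finset

namespace RB

theorem sub_r (p q : RB) : (p - q).r = p.r - q.r := rfl
theorem sub_i (p q : RB) : (p - q).i = p.i - q.i := rfl
theorem sub_j (p q : RB) : (p - q).j = p.j - q.j := rfl
theorem sub_k (p q : RB) : (p - q).k = p.k - q.k := rfl

/-- `r` as an additive monoid hom. -/
def rh : RB →+ ℝ := ⟨⟨RB.r, rfl⟩, fun _ _ => rfl⟩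
def ih : RB →+ ℝ := ⟨⟨RB.i, rfl⟩, fun _ _ => rfl⟩
def jh : RB →+ ℝ := ⟨⟨RB.j, rfl⟩, fun _ _ => rfl⟩
def kh : RB →+ ℝ := ⟨⟨RB.k, rfl⟩, fun _ _ => rfl⟩

theorem sum_r {α : Type*} (S : Finset α) (f : α → RB) :
    (∑ x ∈ S, f x).r = ∑ x ∈ S, (f x).r := map_sum rh f S
theorem sum_i {α : Type*} (S : Finset α) (f : α → RB) :
    (∑ x ∈ S, f x).i = ∑ x ∈ S, (f x).i := map_sum ih f S
theorem sum_j {α : Type*} (S : Finset α) (f : α → RB) :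
    (∑ x ∈ S, f x).j = ∑ x ∈ S, (f x).j := map_sum jh f S
theorem sum_k {α : Type*} (S : Finset α) (f : α → RB) :
    (∑ x ∈ S, f x).k = ∑ x ∈ S, (f x).k := map_sum kh f S

end RB

end Aux
namespace RBaux

open Finset

variable {m n k : Type*} [Fintype m] [Fintype n] [Fintype k]

/-- The 4-dimensional real dot product of two RB numbers. -/
def dot (p q : RB) : ℝ := p.r * q.r + p.i * q.i + p.j * q.j + p.k * q.k

theorem conj_mul_r (p q : RB) : (RB.conj p * q).r = dot p q := by
  simp [RB.conj, dot]

/-- The real Frobenius inner product of two RB matrices. -/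
def ip (A B : Matrix m n RB) : ℝ := ∑ a, ∑ b, dot (A a b) (B a b)

theorem minner_r (A B : Matrix m n RB) : (minner A B).r = ip A B := by
  unfold minner ip
  rw [RB.sum_r]
  refine Finset.sum_congr rfl fun a _ => ?_
  rw [RB.sum_r]
  exact Finset.sum_congr rfl fun b _ => conj_mul_r _ _

theorem dot_comm (p q : RB) : dot p q = dot q p := by unfold dot; ring

theorem ip_comm (A B : Matrix m n RB) : ip A B = ip B A := by
  unfold ip; exact Finset.sum_congr rfl fun a _ => Finset.sum_congr rfl fun b _ => dot_comm _ _

theorem ip_nonneg (A : Matrix m n RB) : 0 ≤ ip A A := by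
  refine Finset.sum_nonneg fun a _ => Finset.sum_nonneg fun b _ => ?_
  unfold dot
  nlinarith [mul_self_nonneg (A a b).r, mul_self_nonneg (A a b).i,
    mul_self_nonneg (A a b).j, mul_self_nonneg (A a b).k]

theorem fnorm_sq (A : Matrix m n RB) : fnorm A ^ 2 = ip A A := by
  rw [fnorm, Real.sq_sqrt (by rw [minner_r]; exact ip_nonneg A), minner_r]

theorem ip_sub_sub (A B : Matrix m n RB) :
    ip (A - B) (A - B) = ip A A - 2 * ip A B + ip B B := by
  unfold ip
  rw [Finset.mul_sum, ← Finset.sum_sub_distrib, ← Finset.sum_add_distrib]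
  refine Finset.sum_congr rfl fun a _ => ?_
  rw [Finset.mul_sum, ← Finset.sum_sub_distrib, ← Finset.sum_add_distrib]
  refine Finset.sum_congr rfl fun b _ => ?_
  simp only [Matrix.sub_apply, dot, RB.sub_r, RB.sub_i, RB.sub_j, RB.sub_k]
  ring

theorem ip_mul_right (A : Matrix m n RB) (B : Matrix m k RB) (C : Matrix k n RB) :
    ip A (B * C) = ip (A * Cᴴ) B := by
  unfold ip
  simp only [Matrix.mul_apply, Matrix.conjTranspose_apply, dot,
    RB.sum_r, RB.sum_i, RB.sum_j, RB.sum_k, Finset.sum_mul, Finset.mul_sum,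
    ← Finset.sum_add_distrib]
  refine Finset.sum_congr rfl fun a _ => ?_
  rw [Finset.sum_comm]
  refine Finset.sum_congr rfl fun c _ => Finset.sum_congr rfl fun b _ => ?_
  show _ = _
  simp only [RB.mul_r, RB.mul_i, RB.mul_j, RB.mul_k]
  show _ = _ * (B a c).r + _ * (B a c).i + _ * (B a c).j + _ * (B a c).k
  simp only [star, RB.conj]
  ring

end RBaux
namespace RBaux

open Finset

variable {m n k : Type*} [Fintype m] [Fintype n] [Fintype k]

theorem ip_transpose (A B : Matrix m n RB) : ip Aᵀ Bᵀ = ip A B := by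
  unfold ip
  exact Finset.sum_comm

theorem ip_mul_left (A : Matrix m n RB) (B : Matrix m k RB) (C : Matrix k n RB) :
    ip A (B * C) = ip (Bᴴ * A) C := by
  have h1 : (B * C)ᵀ = Cᵀ * Bᵀ := Matrix.transpose_mul B C
  have h2 : Aᵀ * (Bᴴ)ᵀ = (Bᴴ * A)ᵀ := (Matrix.transpose_mul (Bᴴ) A).symm
  have h3 : (Bᵀ)ᴴ = (Bᴴ)ᵀ := by
    ext a b <;> rfl
  calc ip A (B * C) = ip Aᵀ (B * C)ᵀ := (ip_transpose _ _).symm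
    _ = ip Aᵀ (Cᵀ * Bᵀ) := by rw [h1]
    _ = ip (Aᵀ * (Bᵀ)ᴴ) Cᵀ := ip_mul_right _ _ _
    _ = ip ((Bᴴ * A)ᵀ) Cᵀ := by rw [h3, h2]
    _ = ip (Bᴴ * A) C := ip_transpose _ _

variable {M N l : ℕ}

theorem objf_ip (X : Matrix (Fin M) (Fin N) RB) (W : Matrix (Fin M) (Fin l) RB)
    (H : Matrix (Fin l) (Fin N) RB) :
    objf X W H = (1 / 2) * ip (X - W * H) (X - W * H) := by
  rw [objf, fnorm_sq]

/-- Quadratic expansion of the objective in the `W` variable. -/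
theorem expandW (X : Matrix (Fin M) (Fin N) RB) (W D : Matrix (Fin M) (Fin l) RB)
    (H : Matrix (Fin l) (Fin N) RB) :
    objf X (W + D) H = objf X W H + ip (gradW X W H) D + (1 / 2) * ip (D * H) (D * H) := by
  have h1 : X - (W + D) * H = (X - W * H) - D * H := by rw [Matrix.add_mul]; abel
  rw [objf_ip, objf_ip, h1, ip_sub_sub]
  have h2 : ip (X - W * H) (D * H) = ip ((X - W * H) * Hᴴ) D := ip_mul_right _ _ _
  have h3 : gradW X W H = -((X - W * H) * Hᴴ) := by rw [gradW, ← Matrix.neg_mul]; congr 1; abel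
  have h4 : ip (gradW X W H) D = -ip ((X - W * H) * Hᴴ) D := by
    rw [h3]
    unfold ip
    rw [← Finset.sum_neg_distrib]
    refine Finset.sum_congr rfl fun a _ => ?_
    rw [← Finset.sum_neg_distrib]
    refine Finset.sum_congr rfl fun b _ => ?_
    simp only [Matrix.neg_apply, dot, RB.neg_r, RB.neg_i, RB.neg_j, RB.neg_k]
    ring
  rw [h4, ← h2]
  ring

/-- Quadratic expansion of the objective in the `H` variable. -/
theorem expandH (X : Matrix (Fin M) (Fin N) RB) (W : Matrix (Fin M) (Fin l) RB)
    (H D : Matrix (Fin l) (Fin N) RB) :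
    objf X W (H + D) = objf X W H + ip (gradH X W H) D + (1 / 2) * ip (W * D) (W * D) := by
  have h1 : X - W * (H + D) = (X - W * H) - W * D := by rw [Matrix.mul_add]; abel
  rw [objf_ip, objf_ip, h1, ip_sub_sub]
  have h2 : ip (X - W * H) (W * D) = ip (Wᴴ * (X - W * H)) D := ip_mul_left _ _ _
  have h3 : gradH X W H = -(Wᴴ * (X - W * H)) := by
    rw [gradH, ← Matrix.mul_neg]; congr 1; abel
  have h4 : ip (gradH X W H) D = -ip (Wᴴ * (X - W * H)) D := by
    rw [h3]
    unfold ip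
    rw [← Finset.sum_neg_distrib]
    refine Finset.sum_congr rfl fun a _ => ?_
    rw [← Finset.sum_neg_distrib]
    refine Finset.sum_congr rfl fun b _ => ?_
    simp only [Matrix.neg_apply, dot, RB.neg_r, RB.neg_i, RB.neg_j, RB.neg_k]
    ring
  rw [h4, ← h2]
  ring

theorem real_proj_ineq (x z : ℝ) (hz : 0 ≤ z) : (x - max x 0) * (z - max x 0) ≤ 0 := by
  rcases le_or_gt 0 x with h | h
  · rw [max_eq_left h]; simp
  · rw [max_eq_right h.le]; simp only [sub_zero]
    exact mul_nonpos_of_nonpos_of_nonneg h.le hz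

/-- The key variational inequality of the projection `proj`. -/
theorem proj_ineq (Q Z : Matrix m n RB) (hZ : Pos Z) :
    ip (Q - proj Q) (Z - proj Q) ≤ 0 := by
  refine Finset.sum_nonpos fun a _ => Finset.sum_nonpos fun b _ => ?_
  obtain ⟨h1, h2, h3, h4⟩ := hZ a b
  simp only [dot, Matrix.sub_apply, RB.sub_r, RB.sub_i, RB.sub_j, RB.sub_k, proj, Matrix.of_apply]
  have := real_proj_ineq (Q a b).r (Z a b).r h1
  have := real_proj_ineq (Q a b).i (Z a b).i h2
  have := real_proj_ineq (Q a b).j (Z a b).j h3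
  have := real_proj_ineq (Q a b).k (Z a b).k h4
  nlinarith

/-- The key variational inequality of the projection `projJ`. -/
theorem projJ_ineq (Q Z : Matrix m n RB) (hZ : PosJ Z) :
    ip (Q - projJ Q) (Z - projJ Q) ≤ 0 := by
  refine Finset.sum_nonpos fun a _ => Finset.sum_nonpos fun b _ => ?_
  obtain ⟨h1, h2, h3, h4⟩ := hZ a b
  simp only [dot, Matrix.sub_apply, RB.sub_r, RB.sub_i, RB.sub_j, RB.sub_k, projJ,
    Matrix.of_apply, h2, h4]
  have := real_proj_ineq (Q a b).r (Z a b).r h1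
  have := real_proj_ineq (Q a b).j (Z a b).j h3
  nlinarith

end RBaux
namespace RBaux

open Finset

variable {m n k : Type*} [Fintype m] [Fintype n] [Fintype k]

theorem dot_self_nonneg (p : RB) : 0 ≤ dot p p := by
  unfold dot
  nlinarith [mul_self_nonneg p.r, mul_self_nonneg p.i, mul_self_nonneg p.j, mul_self_nonneg p.k]

theorem sq4 (a b c d : ℝ) : (a + b + c + d) ^ 2 ≤ 4 * (a ^ 2 + b ^ 2 + c ^ 2 + d ^ 2) := by
  nlinarith [sq_nonneg (a - b), sq_nonneg (a - c), sq_nonneg (a - d), sq_nonneg (b - c),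
    sq_nonneg (b - d), sq_nonneg (c - d)]

theorem dot_mul_self_le (p q : RB) : dot (p * q) (p * q) ≤ 4 * (dot p p * dot q q) := by
  have hr := sq4 (p.r * q.r) (-(p.i * q.i)) (p.j * q.j) (-(p.k * q.k))
  have hi := sq4 (p.r * q.i) (p.i * q.r) (p.j * q.k) (p.k * q.j)
  have hj := sq4 (p.r * q.j) (p.j * q.r) (-(p.i * q.k)) (-(p.k * q.i))
  have hk := sq4 (p.r * q.k) (p.k * q.r) (p.i * q.j) (p.j * q.i)
  simp only [dot, RB.mul_r, RB.mul_i, RB.mul_j, RB.mul_k]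
  nlinarith [hr, hi, hj, hk]

theorem dot_sum_self_le {α : Type*} [Fintype α] (x : α → RB) :
    dot (∑ c, x c) (∑ c, x c) ≤ (Fintype.card α : ℝ) * ∑ c, dot (x c) (x c) := by
  have e : ∀ y : RB, y.r * y.r + y.i * y.i + y.j * y.j + y.k * y.k
      = y.r ^ 2 + y.i ^ 2 + y.j ^ 2 + y.k ^ 2 := fun y => by ring
  have hr := sq_sum_le_card_mul_sum_sq (s := (univ : Finset α)) (f := fun c => (x c).r)
  have hi := sq_sum_le_card_mul_sum_sq (s := (univ : Finset α)) (f := fun c => (x c).i)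
  have hj := sq_sum_le_card_mul_sum_sq (s := (univ : Finset α)) (f := fun c => (x c).j)
  have hk := sq_sum_le_card_mul_sum_sq (s := (univ : Finset α)) (f := fun c => (x c).k)
  simp only [Finset.card_univ] at hr hi hj hk
  simp only [dot, RB.sum_r, RB.sum_i, RB.sum_j, RB.sum_k, e, Finset.sum_add_distrib, mul_add]
  nlinarith [hr, hi, hj, hk]

theorem ip_mul_self_le (A : Matrix m k RB) (B : Matrix k n RB) :
    ip (A * B) (A * B) ≤ 4 * (Fintype.card k : ℝ) * (ip A A * ip B B) := by
  have step1 : ip (A * B) (A * B)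
      ≤ (Fintype.card k : ℝ) * ∑ a, ∑ b, ∑ c, dot (A a c * B c b) (A a c * B c b) := by
    unfold ip
    rw [Finset.mul_sum]
    refine Finset.sum_le_sum fun a _ => ?_
    rw [Finset.mul_sum]
    refine Finset.sum_le_sum fun b _ => ?_
    rw [Matrix.mul_apply]
    exact dot_sum_self_le _
  have step2 : ∑ a, ∑ b, ∑ c, dot (A a c * B c b) (A a c * B c b)
      ≤ ∑ a, ∑ b, ∑ c, 4 * (dot (A a c) (A a c) * dot (B c b) (B c b)) :=
    Finset.sum_le_sum fun a _ => Finset.sum_le_sum fun b _ => Finset.sum_le_sum fun c _ =>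
      dot_mul_self_le _ _
  have hb : ∀ c : k, (∑ b, dot (B c b) (B c b)) ≤ ip B B := fun c =>
    Finset.single_le_sum (f := fun c' => ∑ b, dot (B c' b) (B c' b))
      (fun c' _ => Finset.sum_nonneg fun b _ => dot_self_nonneg _) (Finset.mem_univ c)
  have step3 : ∑ a, ∑ b, ∑ c, dot (A a c) (A a c) * dot (B c b) (B c b)
      ≤ ip A A * ip B B := by
    have e1 : ∀ a : m, (∑ b, ∑ c, dot (A a c) (A a c) * dot (B c b) (B c b))
        = ∑ c, dot (A a c) (A a c) * ∑ b, dot (B c b) (B c b) := by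
      intro a
      rw [Finset.sum_comm]
      exact Finset.sum_congr rfl fun c _ => (Finset.mul_sum _ _ _).symm
    calc ∑ a, ∑ b, ∑ c, dot (A a c) (A a c) * dot (B c b) (B c b)
        = ∑ a, ∑ c, dot (A a c) (A a c) * ∑ b, dot (B c b) (B c b) :=
          Finset.sum_congr rfl fun a _ => e1 a
      _ ≤ ∑ a, ∑ c, dot (A a c) (A a c) * ip B B :=
          Finset.sum_le_sum fun a _ => Finset.sum_le_sum fun c _ =>
            mul_le_mul_of_nonneg_left (hb c) (dot_self_nonneg _)
      _ = ip A A * ip B B := by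
          simp only [← Finset.sum_mul]
          rfl
  calc ip (A * B) (A * B)
      ≤ (Fintype.card k : ℝ) * ∑ a, ∑ b, ∑ c, dot (A a c * B c b) (A a c * B c b) := step1
    _ ≤ (Fintype.card k : ℝ) * ∑ a, ∑ b, ∑ c, 4 * (dot (A a c) (A a c) * dot (B c b) (B c b)) := by
        apply mul_le_mul_of_nonneg_left step2 (Nat.cast_nonneg _)
    _ = 4 * (Fintype.card k : ℝ) * ∑ a, ∑ b, ∑ c, dot (A a c) (A a c) * dot (B c b) (B c b) := by
        simp only [← Finset.mul_sum]; ring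
    _ ≤ 4 * (Fintype.card k : ℝ) * (ip A A * ip B B) := by
        apply mul_le_mul_of_nonneg_left step3 (by positivity)

end RBaux
namespace RBaux

open Finset

variable {m n : Type*} [Fintype m] [Fintype n]

theorem ip_entry_congr {A B A' B' : Matrix m n RB}
    (h : ∀ a b, dot (A a b) (B a b) = dot (A' a b) (B' a b)) : ip A B = ip A' B' :=
  Finset.sum_congr rfl fun a _ => Finset.sum_congr rfl fun b _ => h a b

theorem ip_sub_smul_sub (A G P Z : Matrix m n RB) (η : ℝ) :
    ip (A - η • G - P) Z = ip (A - P) Z - η * ip G Z := by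
  unfold ip
  rw [Finset.mul_sum, ← Finset.sum_sub_distrib]
  refine Finset.sum_congr rfl fun a _ => ?_
  rw [Finset.mul_sum, ← Finset.sum_sub_distrib]
  refine Finset.sum_congr rfl fun b _ => ?_
  simp only [dot, Matrix.sub_apply, Matrix.smul_apply, RB.sub_r, RB.sub_i, RB.sub_j, RB.sub_k,
    RB.smul_r, RB.smul_i, RB.smul_j, RB.smul_k]
  ring

theorem ip_neg_neg (A B : Matrix m n RB) : ip (-A) (-B) = ip A B :=
  ip_entry_congr fun a b => by
    simp only [dot, Matrix.neg_apply, RB.neg_r, RB.neg_i, RB.neg_j, RB.neg_k]; ring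

theorem ip_neg_right (A B : Matrix m n RB) : ip A (-B) = -ip A B := by
  unfold ip
  rw [← Finset.sum_neg_distrib]
  refine Finset.sum_congr rfl fun a _ => ?_
  rw [← Finset.sum_neg_distrib]
  refine Finset.sum_congr rfl fun b _ => ?_
  simp only [dot, Matrix.neg_apply, RB.neg_r, RB.neg_i, RB.neg_j, RB.neg_k]; ring

theorem ip_zero_left (B : Matrix m n RB) : ip 0 B = 0 := by
  unfold ip
  refine Finset.sum_eq_zero fun a _ => Finset.sum_eq_zero fun b _ => ?_
  simp [dot]

variable {M N l : ℕ}

/-- Key consequence of the projection inequality for the `proj`-based update. -/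
theorem proj_descent (Wm G : Matrix (Fin M) (Fin l) RB) (hW : Pos Wm) {η : ℝ} (hη : 0 < η) :
    ip G (proj (Wm - η • G) - Wm) ≤ 0 ∧
      ip (proj (Wm - η • G) - Wm) (proj (Wm - η • G) - Wm) ≤
        η * -ip G (proj (Wm - η • G) - Wm) := by
  set P := proj (Wm - η • G) with hP
  have key := proj_ineq (Wm - η • G) Wm hW
  rw [← hP, ip_sub_smul_sub] at key
  have e1 : Wm - P = -(P - Wm) := by abel
  rw [e1, ip_neg_neg, ip_neg_right] at key
  constructor
  · nlinarith [ip_nonneg (P - Wm)]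
  · nlinarith

theorem projJ_descent (Hm G : Matrix (Fin l) (Fin N) RB) (hH : PosJ Hm) {η : ℝ} (hη : 0 < η) :
    ip G (projJ (Hm - η • G) - Hm) ≤ 0 ∧
      ip (projJ (Hm - η • G) - Hm) (projJ (Hm - η • G) - Hm) ≤
        η * -ip G (projJ (Hm - η • G) - Hm) := by
  set P := projJ (Hm - η • G) with hP
  have key := projJ_ineq (Hm - η • G) Hm hH
  rw [← hP, ip_sub_smul_sub] at key
  have e1 : Hm - P = -(P - Hm) := by abel
  rw [e1, ip_neg_neg, ip_neg_right] at key
  constructor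
  · nlinarith [ip_nonneg (P - Hm)]
  · nlinarith

/-- Sufficiency of small step sizes for the `W` Armijo condition. -/
theorem armijoW_of_small (X : Matrix (Fin M) (Fin N) RB) (Wm : Matrix (Fin M) (Fin l) RB)
    (Hm : Matrix (Fin l) (Fin N) RB) (hW : Pos Wm) {σ η K : ℝ} (hσ : 0 < σ)
    (hK : ip Hm Hm ≤ K) (hη : 0 < η)
    (hsmall : (2 * l * K + 1) * η ≤ 1 - σ) : armijoW X Wm Hm σ η := by
  have hK0 : 0 ≤ K := le_trans (ip_nonneg Hm) hK
  set G := gradW X Wm Hm with hG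
  set D := proj (Wm - η • G) - Wm with hD
  obtain ⟨hd1, hd2⟩ := proj_descent Wm G hW hη
  rw [← hD] at hd1 hd2
  unfold armijoW
  rw [minner_r, ← hG, ← hD]
  have hPW : proj (Wm - η • G) = Wm + D := by rw [hD]; abel
  rw [hPW, expandW]
  have hq : ip (D * Hm) (D * Hm) ≤ 4 * l * (ip D D * ip Hm Hm) := by
    have := ip_mul_self_le D Hm
    simpa [Fintype.card_fin] using this
  have hDD : 0 ≤ ip D D := ip_nonneg D
  have hHH : 0 ≤ ip Hm Hm := ip_nonneg Hm
  have hl : (0:ℝ) ≤ (l : ℝ) := Nat.cast_nonneg l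
  -- ip D D * ip Hm Hm ≤ (η * -ip G D) * K
  have h5 : ip D D * ip Hm Hm ≤ (η * -ip G D) * K := by
    apply mul_le_mul hd2 hK hHH
    nlinarith
  nlinarith [mul_le_mul_of_nonneg_left h5 (by positivity : (0:ℝ) ≤ 2 * (l:ℝ)),
    mul_le_mul_of_nonneg_right hsmall (by nlinarith : 0 ≤ -ip G D),
    mul_nonneg (mul_nonneg hl hK0) (mul_nonneg hη.le (by nlinarith : 0 ≤ -ip G D))]

/-- Sufficiency of small step sizes for the `H` Armijo condition. -/
theorem armijoH_of_small (X : Matrix (Fin M) (Fin N) RB) (Wm : Matrix (Fin M) (Fin l) RB)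
    (Hm : Matrix (Fin l) (Fin N) RB) (hH : PosJ Hm) {σ η K : ℝ} (hσ : 0 < σ)
    (hK : ip Wm Wm ≤ K) (hη : 0 < η)
    (hsmall : (2 * l * K + 1) * η ≤ 1 - σ) : armijoH X Wm Hm σ η := by
  have hK0 : 0 ≤ K := le_trans (ip_nonneg Wm) hK
  set G := gradH X Wm Hm with hG
  set D := projJ (Hm - η • G) - Hm with hD
  obtain ⟨hd1, hd2⟩ := projJ_descent Hm G hH hη
  rw [← hD] at hd1 hd2
  unfold armijoH
  rw [minner_r, ← hG, ← hD]
  have hPH : projJ (Hm - η • G) = Hm + D := by rw [hD]; abel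
  rw [hPH, expandH]
  have hq : ip (Wm * D) (Wm * D) ≤ 4 * l * (ip Wm Wm * ip D D) := by
    have := ip_mul_self_le Wm D
    simpa [Fintype.card_fin] using this
  have hDD : 0 ≤ ip D D := ip_nonneg D
  have hWW : 0 ≤ ip Wm Wm := ip_nonneg Wm
  have hl : (0:ℝ) ≤ (l : ℝ) := Nat.cast_nonneg l
  have h5 : ip Wm Wm * ip D D ≤ K * (η * -ip G D) := by
    apply mul_le_mul hK hd2 hDD hK0
  nlinarith [mul_le_mul_of_nonneg_left h5 (by positivity : (0:ℝ) ≤ 2 * (l:ℝ)),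
    mul_le_mul_of_nonneg_right hsmall (by nlinarith : 0 ≤ -ip G D),
    mul_nonneg (mul_nonneg hl hK0) (mul_nonneg hη.le (by nlinarith : 0 ≤ -ip G D))]

end RBaux
namespace RBaux

open Finset Filter Topology

/-- Componentwise convergence of an RB-valued sequence. -/
def T4 (f : ℕ → RB) (p : RB) : Prop :=
  Tendsto (fun t => (f t).r) atTop (nhds p.r) ∧
  Tendsto (fun t => (f t).i) atTop (nhds p.i) ∧
  Tendsto (fun t => (f t).j) atTop (nhds p.j) ∧
  Tendsto (fun t => (f t).k) atTop (nhds p.k)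

theorem T4.const (p : RB) : T4 (fun _ => p) p :=
  ⟨tendsto_const_nhds, tendsto_const_nhds, tendsto_const_nhds, tendsto_const_nhds⟩

theorem T4.add {f g : ℕ → RB} {p q : RB} (hf : T4 f p) (hg : T4 g q) :
    T4 (fun t => f t + g t) (p + q) :=
  ⟨hf.1.add hg.1, hf.2.1.add hg.2.1, hf.2.2.1.add hg.2.2.1, hf.2.2.2.add hg.2.2.2⟩

theorem T4.sub {f g : ℕ → RB} {p q : RB} (hf : T4 f p) (hg : T4 g q) :
    T4 (fun t => f t - g t) (p - q) :=
  ⟨hf.1.sub hg.1, hf.2.1.sub hg.2.1, hf.2.2.1.sub hg.2.2.1, hf.2.2.2.sub hg.2.2.2⟩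

theorem T4.mul {f g : ℕ → RB} {p q : RB} (hf : T4 f p) (hg : T4 g q) :
    T4 (fun t => f t * g t) (p * q) := by
  refine ⟨?_, ?_, ?_, ?_⟩ <;> simp only [RB.mul_r, RB.mul_i, RB.mul_j, RB.mul_k]
  · exact (((hf.1.mul hg.1).sub (hf.2.1.mul hg.2.1)).add (hf.2.2.1.mul hg.2.2.1)).sub
      (hf.2.2.2.mul hg.2.2.2)
  · exact (((hf.1.mul hg.2.1).add (hf.2.1.mul hg.1)).add (hf.2.2.1.mul hg.2.2.2)).add
      (hf.2.2.2.mul hg.2.2.1)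
  · exact (((hf.1.mul hg.2.2.1).add (hf.2.2.1.mul hg.1)).sub (hf.2.1.mul hg.2.2.2)).sub
      (hf.2.2.2.mul hg.2.1)
  · exact (((hf.1.mul hg.2.2.2).add (hf.2.2.2.mul hg.1)).add (hf.2.1.mul hg.2.2.1)).add
      (hf.2.2.1.mul hg.2.1)

theorem T4.sum {α : Type*} (S : Finset α) {f : α → ℕ → RB} {p : α → RB}
    (h : ∀ c ∈ S, T4 (f c) (p c)) : T4 (fun t => ∑ c ∈ S, f c t) (∑ c ∈ S, p c) := by
  refine ⟨?_, ?_, ?_, ?_⟩ <;>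
    simp only [RB.sum_r, RB.sum_i, RB.sum_j, RB.sum_k]
  · exact tendsto_finset_sum S fun c hc => (h c hc).1
  · exact tendsto_finset_sum S fun c hc => (h c hc).2.1
  · exact tendsto_finset_sum S fun c hc => (h c hc).2.2.1
  · exact tendsto_finset_sum S fun c hc => (h c hc).2.2.2

variable {m n k : Type*} [Fintype m] [Fintype n] [Fintype k]

/-- Componentwise convergence of an RB-matrix-valued sequence. -/
def MT (F : ℕ → Matrix m n RB) (L : Matrix m n RB) : Prop :=
  ∀ a b, T4 (fun t => F t a b) (L a b)

theorem MT.const (L : Matrix m n RB) : MT (fun _ => L) L := fun a b => T4.const _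

theorem MT.sub {F G : ℕ → Matrix m n RB} {LF LG : Matrix m n RB} (hF : MT F LF)
    (hG : MT G LG) : MT (fun t => F t - G t) (LF - LG) := fun a b => by
  have := (hF a b).sub (hG a b)
  simpa [Matrix.sub_apply] using this

theorem MT.mul {F : ℕ → Matrix m k RB} {G : ℕ → Matrix k n RB} {LF : Matrix m k RB}
    {LG : Matrix k n RB} (hF : MT F LF) (hG : MT G LG) :
    MT (fun t => F t * G t) (LF * LG) := fun a b => by
  simp only [Matrix.mul_apply]
  exact T4.sum Finset.univ fun c _ => (hF a c).mul (hG c b)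

theorem MT.conjT {F : ℕ → Matrix m n RB} {LF : Matrix m n RB} (hF : MT F LF) :
    MT (fun t => (F t)ᴴ) (LFᴴ) := fun a b => by
  obtain ⟨h1, h2, h3, h4⟩ := hF b a
  exact ⟨h1, h2.neg, h3, h4.neg⟩

theorem MT.shift {F : ℕ → Matrix m n RB} {LF : Matrix m n RB} (hF : MT F LF) :
    MT (fun t => F (t + 1)) LF := fun a b => by
  obtain ⟨h1, h2, h3, h4⟩ := hF a b
  exact ⟨h1.comp (tendsto_add_atTop_nat 1), h2.comp (tendsto_add_atTop_nat 1),
    h3.comp (tendsto_add_atTop_nat 1), h4.comp (tendsto_add_atTop_nat 1)⟩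

theorem MT.ip_tendsto {F G : ℕ → Matrix m n RB} {LF LG : Matrix m n RB} (hF : MT F LF)
    (hG : MT G LG) : Tendsto (fun t => ip (F t) (G t)) atTop (nhds (ip LF LG)) := by
  unfold ip
  refine tendsto_finset_sum _ fun a _ => tendsto_finset_sum _ fun b _ => ?_
  obtain ⟨f1, f2, f3, f4⟩ := hF a b
  obtain ⟨g1, g2, g3, g4⟩ := hG a b
  unfold dot
  exact (((f1.mul g1).add (f2.mul g2)).add (f3.mul g3)).add (f4.mul g4)

end RBaux
open RBaux Filter

/-- convergence of the RB projected gradient method with Armijo step sizes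
`α_t = μ^{d_t}`, `β_t = μ^{s_t}` (with `d_t`, `s_t` the smallest exponents satisfying the
Armijo condition): any componentwise limit `(W*, H*)` of the iterates is a stationary
point, i.e. it satisfies the variational inequalities. -/
theorem rb_pg_convergence {M N l : ℕ} (X : Matrix (Fin M) (Fin N) RB)
    (σ μ : ℝ) (hσ : σ ∈ Set.Ioo (0 : ℝ) 1) (hμ : μ ∈ Set.Ioo (0 : ℝ) 1)
    (W : ℕ → Matrix (Fin M) (Fin l) RB) (H : ℕ → Matrix (Fin l) (Fin N) RB)
    (d s : ℕ → ℕ)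
    (hWpos : ∀ t, Pos (W t)) (hHpos : ∀ t, PosJ (H t))
    (hWstep : ∀ t, W (t + 1) = proj (W t - μ ^ d t • gradW X (W t) (H t)))
    (hWarm : ∀ t, armijoW X (W t) (H t) σ (μ ^ d t))
    (hWmin : ∀ t, ∀ d' < d t, ¬ armijoW X (W t) (H t) σ (μ ^ d'))
    (hHstep : ∀ t, H (t + 1) = projJ (H t - μ ^ s t • gradH X (W (t + 1)) (H t)))
    (hHarm : ∀ t, armijoH X (W (t + 1)) (H t) σ (μ ^ s t))
    (hHmin : ∀ t, ∀ s' < s t, ¬ armijoH X (W (t + 1)) (H t) σ (μ ^ s'))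
    (Ws : Matrix (Fin M) (Fin l) RB) (Hs : Matrix (Fin l) (Fin N) RB)
    (hWlim : ∀ a b,
      Filter.Tendsto (fun t => (W t a b).r) Filter.atTop (nhds ((Ws a b).r)) ∧
      Filter.Tendsto (fun t => (W t a b).i) Filter.atTop (nhds ((Ws a b).i)) ∧
      Filter.Tendsto (fun t => (W t a b).j) Filter.atTop (nhds ((Ws a b).j)) ∧
      Filter.Tendsto (fun t => (W t a b).k) Filter.atTop (nhds ((Ws a b).k)))
    (hHlim : ∀ a b,
      Filter.Tendsto (fun t => (H t a b).r) Filter.atTop (nhds ((Hs a b).r)) ∧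
      Filter.Tendsto (fun t => (H t a b).i) Filter.atTop (nhds ((Hs a b).i)) ∧
      Filter.Tendsto (fun t => (H t a b).j) Filter.atTop (nhds ((Hs a b).j)) ∧
      Filter.Tendsto (fun t => (H t a b).k) Filter.atTop (nhds ((Hs a b).k))) :
    (∀ Mm : Matrix (Fin M) (Fin l) RB, Pos Mm →
      0 ≤ (minner (gradW X Ws Hs) (Mm - Ws)).r) ∧
    (∀ Nn : Matrix (Fin l) (Fin N) RB, PosJ Nn →
      0 ≤ (minner (gradH X Ws Hs) (Nn - Hs)).r) := by
  obtain ⟨hσ0, hσ1⟩ := hσ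
  obtain ⟨hμ0, hμ1⟩ := hμ
  have hl1σ : 0 < 1 - σ := by linarith
  have hWmt : MT W Ws := fun a b => hWlim a b
  have hHmt : MT H Hs := fun a b => hHlim a b
  have hW1mt : MT (fun t => W (t + 1)) Ws := hWmt.shift
  have hH1mt : MT (fun t => H (t + 1)) Hs := hHmt.shift
  obtain ⟨K1, hK1⟩ := (hHmt.ip_tendsto hHmt).bddAbove_range
  obtain ⟨K2, hK2⟩ := (hW1mt.ip_tendsto hW1mt).bddAbove_range
  set K := max K1 K2 with hKdef
  have hKH : ∀ t, ip (H t) (H t) ≤ K := fun t =>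
    le_trans (hK1 ⟨t, rfl⟩) (le_max_left _ _)
  have hKW : ∀ t, ip (W (t + 1)) (W (t + 1)) ≤ K := fun t =>
    le_trans (hK2 ⟨t, rfl⟩) (le_max_right _ _)
  have hK0 : 0 ≤ K := le_trans (ip_nonneg (H 0)) (hKH 0)
  have hden : 0 < 2 * (l : ℝ) * K + 1 := by positivity
  set ηb := (1 - σ) / (2 * l * K + 1) with hηb
  have hηb0 : 0 < ηb := div_pos hl1σ hden
  set amin := min 1 (μ * ηb) with hamin
  have hamin0 : 0 < amin := lt_min one_pos (mul_pos hμ0 hηb0)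
  have hsmall : ∀ η : ℝ, η ≤ ηb → (2 * l * K + 1) * η ≤ 1 - σ := by
    intro η h2
    calc (2 * l * K + 1) * η ≤ (2 * l * K + 1) * ηb :=
          mul_le_mul_of_nonneg_left h2 hden.le
      _ = 1 - σ := by rw [hηb]; field_simp
  have hμpow : ∀ dd : ℕ, 0 < μ ^ dd := fun dd => pow_pos hμ0 dd
  -- lower bound on the W step sizes
  have hαW : ∀ t, amin ≤ μ ^ d t := by
    intro t
    rcases Nat.eq_zero_or_pos (d t) with h | h
    · rw [h, pow_zero]; exact min_le_left _ _
    · have hd' : d t - 1 < d t := by omega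
      have hgt : ηb < μ ^ (d t - 1) := by
        by_contra hle
        push_neg at hle
        exact hWmin t _ hd' (armijoW_of_small X (W t) (H t) (hWpos t) hσ0 (hKH t)
          (hμpow _) (hsmall _ hle))
      have he : μ ^ d t = μ * μ ^ (d t - 1) := by
        rw [← pow_succ']
        congr 1
        omega
      rw [he]
      calc amin ≤ μ * ηb := min_le_right _ _
        _ ≤ μ * μ ^ (d t - 1) := by nlinarith
  -- lower bound on the H step sizes
  have hαH : ∀ t, amin ≤ μ ^ s t := by
    intro t
    rcases Nat.eq_zero_or_pos (s t) with h | h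
    · rw [h, pow_zero]; exact min_le_left _ _
    · have hs' : s t - 1 < s t := by omega
      have hgt : ηb < μ ^ (s t - 1) := by
        by_contra hle
        push_neg at hle
        exact hHmin t _ hs' (armijoH_of_small X (W (t + 1)) (H t) (hHpos t) hσ0 (hKW t)
          (hμpow _) (hsmall _ hle))
      have he : μ ^ s t = μ * μ ^ (s t - 1) := by
        rw [← pow_succ']
        congr 1
        omega
      rw [he]
      calc amin ≤ μ * ηb := min_le_right _ _
        _ ≤ μ * μ ^ (s t - 1) := by nlinarith
  constructor
  · -- W-side variational inequality
    intro Mm hMm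
    rw [minner_r]
    have hgmt : MT (fun t => gradW X (W t) (H t)) (gradW X Ws Hs) := by
      simp only [gradW]
      exact ((hWmt.mul hHmt).sub (MT.const X)).mul hHmt.conjT
    have hZmt : MT (fun t => Mm - W (t + 1)) (Mm - Ws) := (MT.const Mm).sub hW1mt
    have hytend : Tendsto (fun t => ip (gradW X (W t) (H t)) (Mm - W (t + 1))) atTop
        (nhds (ip (gradW X Ws Hs) (Mm - Ws))) := hgmt.ip_tendsto hZmt
    have hctend : Tendsto (fun t => ip (W t - W (t + 1)) (Mm - W (t + 1))) atTop
        (nhds 0) := by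
      have h0 : ip (Ws - Ws) (Mm - Ws) = 0 := by rw [sub_self]; exact ip_zero_left _
      have := (hWmt.sub hW1mt).ip_tendsto hZmt
      rwa [h0] at this
    have hineq : ∀ t, ip (W t - W (t + 1)) (Mm - W (t + 1)) ≤
        μ ^ d t * ip (gradW X (W t) (H t)) (Mm - W (t + 1)) := by
      intro t
      have key := proj_ineq (W t - μ ^ d t • gradW X (W t) (H t)) Mm hMm
      rw [ip_sub_smul_sub, ← hWstep t] at key
      linarith
    have hlow : ∀ t, -|ip (W t - W (t + 1)) (Mm - W (t + 1))| / amin ≤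
        ip (gradW X (W t) (H t)) (Mm - W (t + 1)) := by
      intro t
      set ct := ip (W t - W (t + 1)) (Mm - W (t + 1))
      set yt := ip (gradW X (W t) (H t)) (Mm - W (t + 1))
      rcases le_or_gt 0 yt with hyt | hyt
      · calc -|ct| / amin ≤ 0 := by
              apply div_nonpos_of_nonpos_of_nonneg (neg_nonpos_of_nonneg (abs_nonneg _))
                hamin0.le
          _ ≤ yt := hyt
      · rw [div_le_iff₀ hamin0]
        have h1 : μ ^ d t * yt ≤ amin * yt :=
          mul_le_mul_of_nonpos_right (hαW t) hyt.le
        have h2 : -|ct| ≤ ct := neg_abs_le ct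
        have := hineq t
        nlinarith
    have hbtend : Tendsto (fun t => -|ip (W t - W (t + 1)) (Mm - W (t + 1))| / amin) atTop
        (nhds 0) := by
      have := (hctend.abs.neg).div_const amin
      simpa using this
    exact le_of_tendsto_of_tendsto' hbtend hytend hlow
  · -- H-side variational inequality
    intro Nn hNn
    rw [minner_r]
    have hgmt : MT (fun t => gradH X (W (t + 1)) (H t)) (gradH X Ws Hs) := by
      simp only [gradH]
      exact hW1mt.conjT.mul ((hW1mt.mul hHmt).sub (MT.const X))
    have hZmt : MT (fun t => Nn - H (t + 1)) (Nn - Hs) := (MT.const Nn).sub hH1mt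
    have hytend : Tendsto (fun t => ip (gradH X (W (t + 1)) (H t)) (Nn - H (t + 1))) atTop
        (nhds (ip (gradH X Ws Hs) (Nn - Hs))) := hgmt.ip_tendsto hZmt
    have hctend : Tendsto (fun t => ip (H t - H (t + 1)) (Nn - H (t + 1))) atTop
        (nhds 0) := by
      have h0 : ip (Hs - Hs) (Nn - Hs) = 0 := by rw [sub_self]; exact ip_zero_left _
      have := (hHmt.sub hH1mt).ip_tendsto hZmt
      rwa [h0] at this
    have hineq : ∀ t, ip (H t - H (t + 1)) (Nn - H (t + 1)) ≤
        μ ^ s t * ip (gradH X (W (t + 1)) (H t)) (Nn - H (t + 1)) := by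
      intro t
      have key := projJ_ineq (H t - μ ^ s t • gradH X (W (t + 1)) (H t)) Nn hNn
      rw [ip_sub_smul_sub, ← hHstep t] at key
      linarith
    have hlow : ∀ t, -|ip (H t - H (t + 1)) (Nn - H (t + 1))| / amin ≤
        ip (gradH X (W (t + 1)) (H t)) (Nn - H (t + 1)) := by
      intro t
      set ct := ip (H t - H (t + 1)) (Nn - H (t + 1))
      set yt := ip (gradH X (W (t + 1)) (H t)) (Nn - H (t + 1))
      rcases le_or_gt 0 yt with hyt | hyt
      · calc -|ct| / amin ≤ 0 := by
              apply div_nonpos_of_nonpos_of_nonneg (neg_nonpos_of_nonneg (abs_nonneg _))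
                hamin0.le
          _ ≤ yt := hyt
      · rw [div_le_iff₀ hamin0]
        have h1 : μ ^ s t * yt ≤ amin * yt :=
          mul_le_mul_of_nonpos_right (hαH t) hyt.le
        have h2 : -|ct| ≤ ct := neg_abs_le ct
        have := hineq t
        nlinarith
    have hbtend : Tendsto (fun t => -|ip (H t - H (t + 1)) (Nn - H (t + 1))| / amin) atTop
        (nhds 0) := by
      have := (hctend.abs.neg).div_const amin
      simpa using this
    exact le_of_tendsto_of_tendsto' hbtend hytend hlow
end
end
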